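/- Let A be a commutative unital complex Banach algebra and let ψ : Aˣ → ℂ be an additive character of its unit group that is holomorphic on the open set of invertible elements. Then for every a ∈ A one has ψ(exp a) = (Dψ(1))(a), where Dψ(1) denotes the Fréchet derivative of ψ at the identity 1 ∈ Aˣ (a continuous complex-linear functional on A); moreover (Dψ(1))(c·1) = 0 for every c ∈ ℂ. -/

import Mathlib

open NormedSpace in
/-- Let `A` be a commutative unital complex Banach algebra and `ψ : A → ℂ` a
function that is holomorphic on the open set of invertible elements and
restricts to an additive character of the unit group.  Then
`ψ (exp a) = (Dψ(1)) a` for every `a : A`, where `Dψ(1)` is the Fréchet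
derivative of `ψ` at `1`; moreover `(Dψ(1)) (c • 1) = 0` for every `c : ℂ`. -/
theorem additive_character_comp_exp_eq_fderiv
    {A : Type*} [NormedCommRing A] [NormedAlgebra ℂ A] [CompleteSpace A]
    (ψ : A → ℂ)
    (hdiff : ∀ x : A, IsUnit x → DifferentiableAt ℂ ψ x)
    (hadd : ∀ x y : A, IsUnit x → IsUnit y → ψ (x * y) = ψ x + ψ y) :
    (∀ a : A, ψ (NormedSpace.exp a) = fderiv ℂ ψ 1 a) ∧
    (∀ c : ℂ, fderiv ℂ ψ 1 (c • (1 : A)) = 0) := by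
  letI : NormedAlgebra ℚ A := NormedAlgebra.restrictScalars ℚ ℂ A
  have hψ1 : ψ 1 = 0 := by
    have := hadd 1 1 isUnit_one isUnit_one
    simp only [one_mul] at this
    exact (left_eq_add.mp this)
  have main : ∀ a : A, ψ (NormedSpace.exp a) = fderiv ℂ ψ 1 a := by
    intro a
    set f : ℂ → ℂ := fun t => ψ (exp (t • a)) with hf
    have hu : ∀ t : ℂ, IsUnit (exp (t • a)) := fun t => isUnit_exp _
    have hfadd : ∀ s t : ℂ, f (s + t) = f s + f t := by
      intro s t
      simp only [hf, add_smul, NormedSpace.exp_add]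
      exact hadd _ _ (hu s) (hu t)
    set c : ℂ := fderiv ℂ ψ 1 a with hcdef
    have hd : ∀ t : ℂ, HasDerivAt f ((fderiv ℂ ψ (exp (t • a))) (exp (t • a) * a)) t :=
      fun t => ((hdiff _ (hu t)).hasFDerivAt).comp_hasDerivAt t (hasDerivAt_exp_smul_const a t)
    have hc0 : HasDerivAt f c 0 := by
      have := hd 0
      simpa [zero_smul, NormedSpace.exp_zero, one_mul] using this
    have hct : ∀ t : ℂ, HasDerivAt f c t := by
      intro t
      have hsub : HasDerivAt (fun u : ℂ => u - t) 1 t := (hasDerivAt_id t).sub_const t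
      have h0 : (t : ℂ) - t = 0 := sub_self t
      have hcomp : HasDerivAt (f ∘ fun u : ℂ => u - t) (c * 1) t := by
        apply HasDerivAt.comp
        · rw [h0]; exact hc0
        · exact hsub
      have hgt : HasDerivAt (fun u : ℂ => f t + f (u - t)) (c * 1) t := by
        exact ((hasDerivAt_const t (f t)).add hcomp).congr_deriv (zero_add _)
      have heq : (fun u : ℂ => f t + f (u - t)) = f := by
        funext u
        rw [← hfadd t (u - t), add_sub_cancel]
      rw [heq] at hgt
      simpa using hgt
    have hg : ∀ t : ℂ, HasDerivAt (fun t : ℂ => f t - c * t) 0 t := by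
      intro t
      have := (hct t).sub ((hasDerivAt_id t).const_mul c)
      exact this.congr_deriv (by simp)
    have hconst : f 1 - c * 1 = f 0 - c * 0 :=
      is_const_of_deriv_eq_zero (fun t => (hg t).differentiableAt)
        (fun t => (hg t).deriv) 1 0
    have hf0 : f 0 = 0 := by
      simp only [hf, zero_smul, NormedSpace.exp_zero]
      exact hψ1
    have hf1 : f 1 = c := by
      rw [hf0] at hconst
      simp only [mul_zero, sub_zero, mul_one, zero_sub] at hconst
      linear_combination hconst
    have : ψ (exp a) = f 1 := by rw [hf]; simp
    rw [this, hf1]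
  refine ⟨main, ?_⟩
  have key : (fderiv ℂ ψ 1) (1 : A) = 0 := by
    have h2pi : exp (((2 * Real.pi * Complex.I : ℂ)) • (1 : A)) = 1 := by
      rw [← Algebra.algebraMap_eq_smul_one, ← NormedSpace.algebraMap_exp_comm,
        ← Complex.exp_eq_exp_ℂ, Complex.exp_two_pi_mul_I, map_one]
    have := main ((2 * Real.pi * Complex.I : ℂ) • (1 : A))
    rw [h2pi, hψ1, map_smul, smul_eq_mul] at this
    have hne : (2 * Real.pi * Complex.I : ℂ) ≠ 0 := by
      simp [Real.pi_ne_zero, Complex.I_ne_zero, Complex.ofReal_ne_zero]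
    field_simp at this
    exact (mul_eq_zero.mp this.symm).resolve_left hne
  intro c
  rw [map_smul, smul_eq_mul, key, mul_zero]
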